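/- arXiv:hep-th/0312049 — 12 statements merged into one kernel-verified Lean document; each statement's English description precedes it below -/
import Mathlib

section
/- Let G be a locally compact topological group with a left Haar measure dz, let (M, dm) be a measure space equipped with a measurable left action ρ of G, and let φ : M → G be a measurable map satisfying the equivariance condition φ(ρ(g)m) = g·φ(m)·g⁻¹ for all g ∈ G, m ∈ M. For a continuous compactly supported F : G × G → ℂ define (Π(F)ψ)(m) = ∫_G F(z, φ(m)) ψ(ρ(z⁻¹)m) dz. Then for all continuous compactly supported F₁, F₂ : G × G → ℂ and every bounded measurable ψ : M → ℂ one has Π(F₁ • F₂)ψ = Π(F₁)(Π(F₂)ψ) pointwise on M, where (F₁ • F₂)(v,u) = ∫_G F₁(z,u) F₂(z⁻¹v, z⁻¹uz) dz is the multiplication of the quantum double D(G). -/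
open MeasureTheory
open scoped Pointwise

/-- The multiplication of the quantum double `D(G)`:
`(F₁ • F₂)(v,u) = ∫_G F₁(z,u) F₂(z⁻¹v, z⁻¹uz) dz`. -/
noncomputable def qdMul {G : Type*} [Group G] [MeasurableSpace G]
    (μ : Measure G) (F₁ F₂ : G × G → ℂ) : G × G → ℂ :=
  fun p => ∫ z, F₁ (z, p.2) * F₂ (z⁻¹ * p.1, z⁻¹ * p.2 * z) ∂μ

/-- The representation `(Π(F)ψ)(m) = ∫_G F(z, φ(m)) ψ(ρ(z⁻¹)m) dz`. -/
noncomputable def qdRep {G M : Type*} [Group G] [MeasurableSpace G]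
    (μ : Measure G) (ρ : G → M → M) (φ : M → G)
    (F : G × G → ℂ) (ψ : M → ℂ) : M → ℂ :=
  fun m => ∫ z, F (z, φ m) * ψ (ρ z⁻¹ m) ∂μ

/-- For a locally compact group `G` with left Haar measure, a measurable `G`-action `ρ`
on a measure space `M` and a measurable map `φ : M → G` with
`φ(ρ(g)m) = g·φ(m)·g⁻¹`, the assignment `F ↦ Π(F)` is multiplicative for the
quantum-double multiplication on continuous compactly supported functions, acting on
bounded measurable `ψ : M → ℂ`. -/
theorem qdRep_multiplicative
    {G : Type*} [Group G] [TopologicalSpace G] [IsTopologicalGroup G]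
    [LocallyCompactSpace G] [MeasurableSpace G] [BorelSpace G]
    (μ : Measure G) [μ.IsHaarMeasure]
    {M : Type*} [MeasurableSpace M] (ν : Measure M)
    (ρ : G → M → M)
    (hρ_one : ∀ m, ρ 1 m = m)
    (hρ_mul : ∀ g h m, ρ (g * h) m = ρ g (ρ h m))
    (hρ_meas : Measurable fun q : G × M => ρ q.1 q.2)
    (φ : M → G) (hφ_meas : Measurable φ)
    (hφ : ∀ g m, φ (ρ g m) = g * φ m * g⁻¹)
    (F₁ F₂ : G × G → ℂ)
    (hF₁c : Continuous F₁) (hF₁s : HasCompactSupport F₁)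
    (hF₂c : Continuous F₂) (hF₂s : HasCompactSupport F₂)
    (ψ : M → ℂ) (hψ_meas : Measurable ψ) (C : ℝ) (hψ_bdd : ∀ m, ‖ψ m‖ ≤ C) :
    ∀ m, qdRep μ ρ φ (qdMul μ F₁ F₂) ψ m = qdRep μ ρ φ F₁ (qdRep μ ρ φ F₂ ψ) m := by
  intro m
  set u := φ m with hu
  -- the continuous compactly supported kernel
  set f : G × G → ℂ := fun p => F₁ (p.1, u) * F₂ (p.1⁻¹ * p.2, p.1⁻¹ * u * p.1) with hf
  have hfc : Continuous f := by
    refine Continuous.mul (hF₁c.comp (continuous_fst.prodMk continuous_const))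
      (hF₂c.comp ((continuous_fst.inv.mul continuous_snd).prodMk
        ((continuous_fst.inv.mul continuous_const).mul continuous_fst)))
  set K : Set G := Prod.fst '' tsupport F₁ with hKdef
  set L : Set G := K * (Prod.fst '' tsupport F₂) with hLdef
  have hKc : IsCompact K := hF₁s.image continuous_fst
  have hLc : IsCompact L := hKc.mul (hF₂s.image continuous_fst)
  have hsupp : Function.support f ⊆ K ×ˢ L := by
    rintro ⟨z, v⟩ hp
    have h1 : F₁ (z, u) ≠ 0 := by
      intro h
      apply hp
      simp only [hf, h, zero_mul]
    have h2 : F₂ (z⁻¹ * v, z⁻¹ * u * z) ≠ 0 := by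
      intro h
      apply hp
      simp only [hf, h, mul_zero]
    have hzK : z ∈ K := ⟨(z, u), subset_tsupport _ h1, rfl⟩
    refine ⟨hzK, z, hzK, z⁻¹ * v,
      ⟨(z⁻¹ * v, z⁻¹ * u * z), subset_tsupport _ h2, rfl⟩, by group⟩
  have hfs : HasCompactSupport f := (hKc.prod hLc).closure_of_subset hsupp
  -- the full integrand
  have hψ' : Measurable fun v : G => ψ (ρ v⁻¹ m) :=
    hψ_meas.comp (hρ_meas.comp (measurable_inv.prodMk measurable_const))
  set g : G × G → ℂ := fun p => f p * ψ (ρ p.2⁻¹ m) with hg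
  have hg_sm : StronglyMeasurable g :=
    (hfs.stronglyMeasurable_of_prod hfc).mul
      ((hψ'.comp measurable_snd).stronglyMeasurable)
  obtain ⟨D, hD⟩ := hfc.bounded_above_of_compact_support hfs
  have hgb : ∀ p : G × G, ‖g p‖ ≤ D * C := by
    intro p
    rw [hg]
    simp only
    rw [norm_mul]
    exact mul_le_mul (hD p) (hψ_bdd _) (norm_nonneg _) ((norm_nonneg _).trans (hD p))
  have hgsupp : ∀ p : G × G, g p ≠ 0 → p.1 ∈ K ∧ p.2 ∈ L := by
    intro p hp
    have : f p ≠ 0 := by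
      intro h
      apply hp
      simp only [hg, h, zero_mul]
    exact hsupp this
  -- restriction sets
  haveI : Fact (μ (closure K) < ⊤) := ⟨hKc.closure.measure_lt_top⟩
  haveI : Fact (μ (closure L) < ⊤) := ⟨hLc.closure.measure_lt_top⟩
  have hKm : MeasurableSet (closure K) := isClosed_closure.measurableSet
  have hLm : MeasurableSet (closure L) := isClosed_closure.measurableSet
  have hInt : Integrable (Function.uncurry fun v z => g (z, v))
      ((μ.restrict (closure L)).prod (μ.restrict (closure K))) := by
    refine ⟨(hg_sm.comp_measurable measurable_swap).aestronglyMeasurable, ?_⟩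
    exact HasFiniteIntegral.of_bounded (C := D * C)
      (Filter.Eventually.of_forall fun p => hgb _)
  -- the central Fubini swap
  have main : ∫ v, ∫ z, g (z, v) ∂μ ∂μ = ∫ z, ∫ v, g (z, v) ∂μ ∂μ := by
    calc ∫ v, ∫ z, g (z, v) ∂μ ∂μ
        = ∫ v, ∫ z in closure K, g (z, v) ∂μ ∂μ := by
          congr 1 with v
          refine (setIntegral_eq_integral_of_forall_compl_eq_zero fun z hz => ?_).symm
          by_contra h
          exact hz (subset_closure (hgsupp (z, v) h).1)
      _ = ∫ v in closure L, ∫ z in closure K, g (z, v) ∂μ ∂μ := by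
          refine (setIntegral_eq_integral_of_forall_compl_eq_zero fun v hv => ?_).symm
          have hz : ∀ z, g (z, v) = 0 := by
            intro z
            by_contra h
            exact hv (subset_closure (hgsupp (z, v) h).2)
          simp [hz]
      _ = ∫ z in closure K, ∫ v in closure L, g (z, v) ∂μ ∂μ :=
          integral_integral_swap hInt
      _ = ∫ z in closure K, ∫ v, g (z, v) ∂μ ∂μ := by
          congr 1 with z
          refine setIntegral_eq_integral_of_forall_compl_eq_zero fun v hv => ?_
          by_contra h
          exact hv (subset_closure (hgsupp (z, v) h).2)
      _ = ∫ z, ∫ v, g (z, v) ∂μ ∂μ := by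
          refine setIntegral_eq_integral_of_forall_compl_eq_zero fun z hz => ?_
          have hzv : ∀ v, g (z, v) = 0 := by
            intro v
            by_contra h
            exact hz (subset_closure (hgsupp (z, v) h).1)
          simp [hzv]
  -- identify LHS
  have hLHS : qdRep μ ρ φ (qdMul μ F₁ F₂) ψ m = ∫ v, ∫ z, g (z, v) ∂μ ∂μ := by
    unfold qdRep qdMul
    congr 1 with v
    rw [← integral_mul_const]
  -- identify RHS
  have hRHS : qdRep μ ρ φ F₁ (qdRep μ ρ φ F₂ ψ) m = ∫ z, ∫ v, g (z, v) ∂μ ∂μ := by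
    unfold qdRep
    congr 1 with z
    have h1 : φ (ρ z⁻¹ m) = z⁻¹ * u * z := by rw [hφ, inv_inv, hu]
    have h2 : ∀ w : G, ρ w⁻¹ (ρ z⁻¹ m) = ρ (z * w)⁻¹ m := by
      intro w
      rw [mul_inv_rev, hρ_mul]
    have hsub : (∫ w, F₂ (w, φ (ρ z⁻¹ m)) * ψ (ρ w⁻¹ (ρ z⁻¹ m)) ∂μ)
        = ∫ v, F₂ (z⁻¹ * v, z⁻¹ * u * z) * ψ (ρ v⁻¹ m) ∂μ := by
      have := integral_mul_left_eq_self
        (μ := μ) (f := fun v => F₂ (z⁻¹ * v, z⁻¹ * u * z) * ψ (ρ v⁻¹ m)) z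
      rw [← this]
      congr 1 with w
      rw [inv_mul_cancel_left, ← h2, h1]
    rw [hsub, ← integral_const_mul]
    congr 1 with v
    simp only [hg, hf, mul_assoc, hu]
  rw [hLHS, hRHS, main]
end

section
/- Let G be a locally compact topological group with a left Haar measure dz. Then the involution F*(v,u) = conj(F(v⁻¹, v⁻¹uv)) on continuous compactly supported functions G × G → ℂ is an anti-homomorphism for the quantum-double multiplication: for all continuous compactly supported F₁, F₂ : G × G → ℂ one has (F₁ • F₂)* = F₂* • F₁*, where (F₁ • F₂)(v,u) = ∫_G F₁(z,u) F₂(z⁻¹v, z⁻¹uz) dz. Moreover (F*)* = F. -/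
open MeasureTheory

/-- The involution of the quantum double `D(G)`: `F*(v,u) = conj (F(v⁻¹, v⁻¹uv))`. -/
def qdStar {G : Type*} [Group G] (F : G × G → ℂ) : G × G → ℂ :=
  fun p => star (F (p.1⁻¹, p.1⁻¹ * p.2 * p.1))

/-- For a locally compact group `G` with a left Haar measure, the involution
`F*(v,u) = conj (F(v⁻¹, v⁻¹uv))` is an anti-homomorphism for the quantum-double
multiplication on continuous compactly supported functions, and it is involutive:
`(F*)* = F`. -/
theorem qdStar_antihomomorphism_and_involutive
    {G : Type*} [Group G] [TopologicalSpace G] [IsTopologicalGroup G]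
    [LocallyCompactSpace G] [MeasurableSpace G] [BorelSpace G]
    (μ : Measure G) [μ.IsHaarMeasure]
    (F₁ F₂ : G × G → ℂ)
    (hF₁c : Continuous F₁) (hF₁s : HasCompactSupport F₁)
    (hF₂c : Continuous F₂) (hF₂s : HasCompactSupport F₂) :
    qdStar (qdMul μ F₁ F₂) = qdMul μ (qdStar F₂) (qdStar F₁) ∧
    qdStar (qdStar F₁) = F₁ := by
  constructor
  · funext p
    obtain ⟨v, u⟩ := p
    simp only [qdStar, qdMul]
    have h1 : (star (∫ z, F₁ (z, v⁻¹ * u * v) *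
        F₂ (z⁻¹ * v⁻¹, z⁻¹ * (v⁻¹ * u * v) * z) ∂μ) : ℂ)
        = ∫ z, star (F₁ (z, v⁻¹ * u * v) *
            F₂ (z⁻¹ * v⁻¹, z⁻¹ * (v⁻¹ * u * v) * z)) ∂μ :=
      (integral_conj (f := fun z => F₁ (z, v⁻¹ * u * v) *
        F₂ (z⁻¹ * v⁻¹, z⁻¹ * (v⁻¹ * u * v) * z))).symm
    rw [h1,
      ← integral_mul_left_eq_self (μ := μ) (fun z => star (F₁ (z, v⁻¹ * u * v) *
        F₂ (z⁻¹ * v⁻¹, z⁻¹ * (v⁻¹ * u * v) * z))) v⁻¹]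
    congr 1
    funext z
    simp only [star_mul', mul_inv_rev, inv_inv]
    rw [mul_comm]
    congr 2 <;> group
  · funext p
    obtain ⟨v, u⟩ := p
    simp only [qdStar, inv_inv, star_star]
    congr 1
    simp only [Prod.mk.injEq, true_and]
    group
end

section
/- Let G be a group and consider tuples (A, B, x₁, …, x_k) ∈ G^(2+k). For g ∈ G define ρ(g) : (A, B, x₁, …, x_k) ↦ (g A g⁻¹, [g,A] B g⁻¹, [g,A] x₁ [g,A]⁻¹, …, [g,A] x_k [g,A]⁻¹), where [g,A] = g A g⁻¹ A⁻¹. Then ρ is a left action of G on G^(2+k): ρ(e) = id and ρ(g₁g₂) = ρ(g₁) ∘ ρ(g₂) for all g₁, g₂ ∈ G. -/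
/-- The group commutator `[x,y] = x y x⁻¹ y⁻¹`. -/
def gcomm {G : Type*} [Group G] (x y : G) : G := x * y * x⁻¹ * y⁻¹

/-- The map `ρ(g) : (A, B, x₁, …, x_k) ↦ (g A g⁻¹, [g,A] B g⁻¹, [g,A] xⱼ [g,A]⁻¹)`
is a left action of `G` on `G^(2+k)`. -/
theorem action_for_curve_a {G : Type*} [Group G] {k : ℕ}
    (ρ : G → (G × G × (Fin k → G)) → (G × G × (Fin k → G)))
    (hρ : ∀ (g A B : G) (x : Fin k → G),
      ρ g (A, B, x) =
        (g * A * g⁻¹,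
         gcomm g A * B * g⁻¹,
         fun l => gcomm g A * x l * (gcomm g A)⁻¹)) :
    (∀ p, ρ 1 p = p) ∧ (∀ g₁ g₂ p, ρ (g₁ * g₂) p = ρ g₁ (ρ g₂ p)) := by
  constructor
  · rintro ⟨A, B, x⟩
    simp [hρ, gcomm]
  · rintro g₁ g₂ ⟨A, B, x⟩
    rw [hρ, hρ, hρ]
    refine Prod.ext ?_ (Prod.ext ?_ (funext fun l => ?_)) <;> simp [gcomm] <;> group
end

section
/- Let G be a group and consider tuples (A, B, x₁, …, x_k) ∈ G^(2+k). Set δ(A,B) = A⁻¹ B⁻¹ A. For g ∈ G define ρ(g) : (A, B, x₁, …, x_k) ↦ ([g,δ] A g⁻¹, [g,δ] B [g,δ]⁻¹, [g,δ] x₁ [g,δ]⁻¹, …, [g,δ] x_k [g,δ]⁻¹), where δ = δ(A,B) and [g,δ] = g δ g⁻¹ δ⁻¹. Then ρ is a left action of G on G^(2+k), and the word δ is equivariant under conjugation: δ applied to the first two components of ρ(g)(A,B,x) equals g · δ(A,B) · g⁻¹. -/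
/-- With `δ = δ(A,B) = A⁻¹B⁻¹A`, the map
`ρ(g) : (A, B, x₁, …, x_k) ↦ ([g,δ] A g⁻¹, [g,δ] B [g,δ]⁻¹, [g,δ] xⱼ [g,δ]⁻¹)`
is a left action of `G` on `G^(2+k)`, and `δ` is equivariant under conjugation. -/
theorem action_for_curve_delta {G : Type*} [Group G] {k : ℕ}
    (δ : G → G → G) (hδ : ∀ A B, δ A B = A⁻¹ * B⁻¹ * A)
    (ρ : G → (G × G × (Fin k → G)) → (G × G × (Fin k → G)))
    (hρ : ∀ (g A B : G) (x : Fin k → G),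
      ρ g (A, B, x) =
        (gcomm g (δ A B) * A * g⁻¹,
         gcomm g (δ A B) * B * (gcomm g (δ A B))⁻¹,
         fun l => gcomm g (δ A B) * x l * (gcomm g (δ A B))⁻¹)) :
    (∀ p, ρ 1 p = p) ∧ (∀ g₁ g₂ p, ρ (g₁ * g₂) p = ρ g₁ (ρ g₂ p)) ∧
    (∀ (g A B : G) (x : Fin k → G),
      δ (ρ g (A, B, x)).1 (ρ g (A, B, x)).2.1 = g * δ A B * g⁻¹) := by
  have hδ' : ∀ (g A B : G) (x : Fin k → G),
      δ (ρ g (A, B, x)).1 (ρ g (A, B, x)).2.1 = g * δ A B * g⁻¹ := by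
    intro g A B x
    rw [hρ]
    simp only [hδ, gcomm]
    group
  refine ⟨?_, ?_, hδ'⟩
  · rintro ⟨A, B, x⟩
    rw [hρ]
    simp only [gcomm]
    refine Prod.ext ?_ (Prod.ext ?_ ?_) <;> simp
  · rintro g₁ g₂ ⟨A, B, x⟩
    have h2 := hρ g₂ A B x
    have key : δ (ρ g₂ (A, B, x)).1 (ρ g₂ (A, B, x)).2.1 = g₂ * δ A B * g₂⁻¹ :=
      hδ' g₂ A B x
    rw [h2] at key ⊢
    rw [hρ (g₁ * g₂) A B x, hρ g₁, key]
    refine Prod.ext ?_ (Prod.ext ?_ ?_) <;> simp only [gcomm, hδ]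
    · group
    · group
    · funext l; group
end

section
/- Let G be a group and consider tuples (A', B', A, B, x₁, …, x_k) ∈ G^(4+k). Set w = A⁻¹ B⁻¹ A B'. For g ∈ G define ρ(g) : A' ↦ g A', B' ↦ g B' g⁻¹, A ↦ [g,w] A g⁻¹, B ↦ [g,w] B [g,w]⁻¹, x_j ↦ [g,w] x_j [g,w]⁻¹ (j = 1,…,k), where w is computed from the argument tuple and [g,w] = g w g⁻¹ w⁻¹. Then ρ is a left action of G on G^(4+k), and the word w is equivariant under conjugation: w evaluated on ρ(g)(A',B',A,B,x) equals g · w(A',B',A,B,x) · g⁻¹. -/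
/-- With `w = A⁻¹ B⁻¹ A B'`, the map
`ρ(g) : (A', B', A, B, x) ↦ (g A', g B' g⁻¹, [g,w] A g⁻¹, [g,w] B [g,w]⁻¹, [g,w] xⱼ [g,w]⁻¹)`
is a left action of `G` on `G^(4+k)`, and the word `w` is equivariant under
conjugation. -/
theorem action_for_curve_alpha {G : Type*} [Group G] {k : ℕ}
    (w : G → G → G → G) (hw : ∀ B' A B, w B' A B = A⁻¹ * B⁻¹ * A * B')
    (ρ : G → (G × G × G × G × (Fin k → G)) → (G × G × G × G × (Fin k → G)))
    (hρ : ∀ (g A' B' A B : G) (x : Fin k → G),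
      ρ g (A', B', A, B, x) =
        (g * A',
         g * B' * g⁻¹,
         gcomm g (w B' A B) * A * g⁻¹,
         gcomm g (w B' A B) * B * (gcomm g (w B' A B))⁻¹,
         fun l => gcomm g (w B' A B) * x l * (gcomm g (w B' A B))⁻¹)) :
    (∀ p, ρ 1 p = p) ∧ (∀ g₁ g₂ p, ρ (g₁ * g₂) p = ρ g₁ (ρ g₂ p)) ∧
    (∀ (g A' B' A B : G) (x : Fin k → G),
      w (ρ g (A', B', A, B, x)).2.1 (ρ g (A', B', A, B, x)).2.2.1
          (ρ g (A', B', A, B, x)).2.2.2.1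
        = g * w B' A B * g⁻¹) := by
  refine ⟨?_, ?_, ?_⟩
  · rintro ⟨A', B', A, B, x⟩
    simp only [hρ, gcomm]
    refine Prod.ext ?_ (Prod.ext ?_ (Prod.ext ?_ (Prod.ext ?_ (funext fun l => ?_)))) <;>
      group
  · rintro g₁ g₂ ⟨A', B', A, B, x⟩
    simp only [hρ, gcomm, hw]
    refine Prod.ext ?_ (Prod.ext ?_ (Prod.ext ?_ (Prod.ext ?_ (funext fun l => ?_)))) <;>
      group
  · intro g A' B' A B x
    simp only [hρ, gcomm, hw]
    group
end

section
/- Let G be a group and consider tuples (A₁, B₁, …, A_{i−1}, B_{i−1}, A, B, x₁, …, x_k) ∈ G^(2(i−1)+2+k). Set K_j = B_j A_j⁻¹ B_j⁻¹ A_j for j = 1,…,i−1 and w = A⁻¹ B⁻¹ A · K_{i−1} ⋯ K₁. For g ∈ G define ρ(g) : A_j ↦ g A_j g⁻¹ and B_j ↦ g B_j g⁻¹ for j = 1,…,i−1; A ↦ [g,w] A g⁻¹; B ↦ [g,w] B [g,w]⁻¹; x_l ↦ [g,w] x_l [g,w]⁻¹ for l = 1,…,k, where w is computed from the argument tuple and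 [g,w] = g w g⁻¹ w⁻¹. Then ρ is a left action of G, and the word w is conjugation-equivariant: w evaluated on ρ(g) of a tuple equals g · w · g⁻¹ evaluated on that tuple. -/
private lemma conj_listprod {G : Type*} [Group G] {p : ℕ} (g : G) (f : Fin p → G) :
    (List.ofFn (fun j => g * f j * g⁻¹)).reverse.prod
      = g * (List.ofFn f).reverse.prod * g⁻¹ := by
  induction p with
  | zero => simp
  | succ n ih =>
      rw [List.ofFn_succ, List.ofFn_succ, List.reverse_cons, List.reverse_cons,
        List.prod_append, List.prod_append]
      simp only [List.prod_cons, List.prod_nil]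
      rw [ih (fun j => f j.succ)]
      group

/-- With `K_j = B_j A_j⁻¹ B_j⁻¹ A_j` and `w = A⁻¹ B⁻¹ A · K_{p} ⋯ K_1`, the map
`ρ(g)` sending `A_j ↦ g A_j g⁻¹`, `B_j ↦ g B_j g⁻¹`, `A ↦ [g,w] A g⁻¹`,
`B ↦ [g,w] B [g,w]⁻¹` and `x_l ↦ [g,w] x_l [g,w]⁻¹` is a left action of `G`, and the
word `w` is conjugation-equivariant. -/
theorem action_for_curve_epsilon {G : Type*} [Group G] {p k : ℕ}
    (K : (Fin p → G) → (Fin p → G) → Fin p → G)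
    (hK : ∀ Ah Bh j, K Ah Bh j = Bh j * (Ah j)⁻¹ * (Bh j)⁻¹ * Ah j)
    (w : (Fin p → G) → (Fin p → G) → G → G → G)
    (hw : ∀ Ah Bh A B,
      w Ah Bh A B = A⁻¹ * B⁻¹ * A * (List.ofFn (K Ah Bh)).reverse.prod)
    (ρ : G → ((Fin p → G) × (Fin p → G) × G × G × (Fin k → G)) →
          ((Fin p → G) × (Fin p → G) × G × G × (Fin k → G)))
    (hρ : ∀ (g : G) (Ah Bh : Fin p → G) (A B : G) (x : Fin k → G),
      ρ g (Ah, Bh, A, B, x) =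
        (fun j => g * Ah j * g⁻¹,
         fun j => g * Bh j * g⁻¹,
         gcomm g (w Ah Bh A B) * A * g⁻¹,
         gcomm g (w Ah Bh A B) * B * (gcomm g (w Ah Bh A B))⁻¹,
         fun l => gcomm g (w Ah Bh A B) * x l * (gcomm g (w Ah Bh A B))⁻¹)) :
    (∀ q, ρ 1 q = q) ∧ (∀ g₁ g₂ q, ρ (g₁ * g₂) q = ρ g₁ (ρ g₂ q)) ∧
    (∀ (g : G) (Ah Bh : Fin p → G) (A B : G) (x : Fin k → G),
      w (ρ g (Ah, Bh, A, B, x)).1 (ρ g (Ah, Bh, A, B, x)).2.1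
          (ρ g (Ah, Bh, A, B, x)).2.2.1 (ρ g (Ah, Bh, A, B, x)).2.2.2.1
        = g * w Ah Bh A B * g⁻¹) := by
  have hweq : ∀ (g : G) (Ah Bh : Fin p → G) (A B : G),
      w (fun j => g * Ah j * g⁻¹) (fun j => g * Bh j * g⁻¹)
        (gcomm g (w Ah Bh A B) * A * g⁻¹)
        (gcomm g (w Ah Bh A B) * B * (gcomm g (w Ah Bh A B))⁻¹)
      = g * w Ah Bh A B * g⁻¹ := by
    intro g Ah Bh A B
    have hKc : K (fun j => g * Ah j * g⁻¹) (fun j => g * Bh j * g⁻¹)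
        = fun j => g * K Ah Bh j * g⁻¹ := by
      funext j
      rw [hK, hK]
      group
    rw [hw, hKc, conj_listprod, hw Ah Bh A B, gcomm]
    group
  refine ⟨?_, ?_, ?_⟩
  · rintro ⟨Ah, Bh, A, B, x⟩
    rw [hρ]
    simp [gcomm]
  · rintro g₁ g₂ ⟨Ah, Bh, A, B, x⟩
    rw [hρ, hρ, hρ, hweq]
    refine Prod.ext ?_ (Prod.ext ?_ (Prod.ext ?_ (Prod.ext ?_ ?_))) <;>
      simp only [gcomm] <;> first
        | (funext j; group)
        | group
  · intro g Ah Bh A B x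
    rw [hρ]
    exact hweq g Ah Bh A B
end

section
/- Let G be a group, fix elements g₁, …, g_n ∈ G, and for v ∈ G^n × G^(2g) with components (v₁, …, v_n, C₁, …, C_{2g}) set u_i = v_i g_i v_i⁻¹. Fix indices 1 ≤ ν < μ ≤ n and set u_κ = u_μ u_ν. For g ∈ G define ρ(g) : v_ν ↦ g v_ν; v_τ ↦ [g, u_ν] v_τ for ν < τ < μ; v_μ ↦ g v_μ; v_τ ↦ [g, u_κ] v_τ for τ > μ; v_τ unchanged for τ < ν; and C_l ↦ [g, u_κ] C_l [g, u_κ]⁻¹ for l = 1,…,2g, where u_ν, u_κ are computed from the argument tuple and [x,y] = x y x⁻¹ y⁻¹. Then ρ is a left action of G on G^(n+2g), and u_κ is conjugation-equivariant: u_κ evaluated on ρ(g) of a tuple equals g · u_κ · g⁻¹ evaluated on that tuple. -/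
/-- The lifted `G`-action associated to the curve `κ_{ν,μ} = m_μ m_ν`: with
`u_i = v_i g_i v_i⁻¹` and `u_κ = u_μ u_ν`, the map `ρ(g)` sending `v_ν ↦ g v_ν`,
`v_τ ↦ [g,u_ν] v_τ` for `ν < τ < μ`, `v_μ ↦ g v_μ`, `v_τ ↦ [g,u_κ] v_τ` for `τ > μ`,
leaving `v_τ` fixed for `τ < ν`, and `C_l ↦ [g,u_κ] C_l [g,u_κ]⁻¹`, is a left action
of `G` on `G^(n+2g)`, and `u_κ` is conjugation-equivariant. -/
theorem lifted_action_for_curve_kappa_nu_mu {G : Type*} [Group G] {n k : ℕ}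
    (gg : Fin n → G) (ν μ' : Fin n) (hνμ : ν < μ')
    (u : (Fin n → G) → Fin n → G)
    (hu : ∀ v i, u v i = v i * gg i * (v i)⁻¹)
    (uκ : (Fin n → G) → G) (huκ : ∀ v, uκ v = u v μ' * u v ν)
    (ρ : G → ((Fin n → G) × (Fin k → G)) → ((Fin n → G) × (Fin k → G)))
    (hρ : ∀ (g : G) (v : Fin n → G) (C : Fin k → G),
      ρ g (v, C) =
        (fun τ =>
          if τ = ν then g * v τ
          else if τ = μ' then g * v τ
          else if ν < τ ∧ τ < μ' then gcomm g (u v ν) * v τ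
          else if μ' < τ then gcomm g (uκ v) * v τ
          else v τ,
         fun l => gcomm g (uκ v) * C l * (gcomm g (uκ v))⁻¹)) :
    (∀ q, ρ 1 q = q) ∧ (∀ g₁ g₂ q, ρ (g₁ * g₂) q = ρ g₁ (ρ g₂ q)) ∧
    (∀ (g : G) (v : Fin n → G) (C : Fin k → G),
      uκ (ρ g (v, C)).1 = g * uκ v * g⁻¹) := by
  have hne : μ' ≠ ν := hνμ.ne'
  set F : G → (Fin n → G) → (Fin n → G) := fun g v τ =>
    if τ = ν then g * v τ
    else if τ = μ' then g * v τ
    else if ν < τ ∧ τ < μ' then gcomm g (u v ν) * v τ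
    else if μ' < τ then gcomm g (uκ v) * v τ
    else v τ with hF
  have hFval : ∀ g v τ, F g v τ =
      (if τ = ν then g * v τ
      else if τ = μ' then g * v τ
      else if ν < τ ∧ τ < μ' then gcomm g (u v ν) * v τ
      else if μ' < τ then gcomm g (uκ v) * v τ
      else v τ) := fun _ _ _ => rfl
  have hFν : ∀ g v, F g v ν = g * v ν := by intro g v; rw [hFval]; simp
  have hFμ : ∀ g v, F g v μ' = g * v μ' := by intro g v; rw [hFval]; simp [hne]
  have huνF : ∀ g v, u (F g v) ν = g * u v ν * g⁻¹ := by
    intro g v; rw [hu, hu, hFν]; group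
  have huμF : ∀ g v, u (F g v) μ' = g * u v μ' * g⁻¹ := by
    intro g v; rw [hu, hu, hFμ]; group
  have huκF : ∀ g v, uκ (F g v) = g * uκ v * g⁻¹ := by
    intro g v; rw [huκ, huκ, huνF, huμF]; group
  have hρ' : ∀ g v C, ρ g (v, C) =
      (F g v, fun l => gcomm g (uκ v) * C l * (gcomm g (uκ v))⁻¹) := hρ
  refine ⟨?_, ?_, ?_⟩
  · rintro ⟨v, C⟩
    rw [hρ']
    refine Prod.ext ?_ ?_
    · funext τ
      show F 1 v τ = v τ
      rw [hFval]
      split_ifs <;> simp [gcomm]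
    · funext l
      show gcomm 1 (uκ v) * C l * (gcomm 1 (uκ v))⁻¹ = C l
      simp [gcomm]
  · intro g₁ g₂ q
    obtain ⟨v, C⟩ := q
    rw [hρ', hρ', hρ']
    refine Prod.ext ?_ ?_
    · funext τ
      show F (g₁ * g₂) v τ = F g₁ (F g₂ v) τ
      by_cases h1 : τ = ν
      · subst h1; rw [hFval, hFval, hFν]; simp [mul_assoc]
      by_cases h2 : τ = μ'
      · subst h2; rw [hFval, hFval, hFμ]; simp [hne, mul_assoc]
      by_cases h3 : ν < τ ∧ τ < μ'
      · rw [hFval, hFval (v := F g₂ v), hFval g₂ v τ]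
        simp only [if_neg h1, if_neg h2, if_pos h3]
        rw [huνF]; simp only [gcomm]; group
      by_cases h4 : μ' < τ
      · rw [hFval, hFval (v := F g₂ v), hFval g₂ v τ]
        simp only [if_neg h1, if_neg h2, if_neg h3, if_pos h4]
        rw [huκF]; simp only [gcomm]; group
      · rw [hFval, hFval (v := F g₂ v), hFval g₂ v τ]
        simp only [if_neg h1, if_neg h2, if_neg h3, if_neg h4]
    · funext l
      show gcomm (g₁ * g₂) (uκ v) * C l * (gcomm (g₁ * g₂) (uκ v))⁻¹ =
        gcomm g₁ (uκ (F g₂ v)) * (gcomm g₂ (uκ v) * C l * (gcomm g₂ (uκ v))⁻¹) *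
          (gcomm g₁ (uκ (F g₂ v)))⁻¹
      rw [huκF]
      simp only [gcomm]
      group
  · intro g v C
    rw [hρ']
    exact huκF g v
end

section
/- Let G be a group, fix g₁, …, g_n ∈ G, and for a tuple (v₁, …, v_n, A₁, B₁, …, A_g, B_g) ∈ G^(n+2g) set u_ν = v_ν g_ν v_ν⁻¹. Fix 1 ≤ ν ≤ n and 1 ≤ i ≤ g, and set u_κ = B_i u_ν. For g ∈ G define ρ(g) : v_ν ↦ g v_ν; v_τ ↦ [g, u_ν] v_τ for τ > ν; v_τ unchanged for τ < ν; A_j ↦ [g,u_ν] A_j [g,u_ν]⁻¹ and B_j ↦ [g,u_ν] B_j [g,u_ν]⁻¹ for j < i; A_i ↦ g A_i [g, u_ν]⁻¹; B_i ↦ g B_i g⁻¹; and A_j ↦ [g, u_κ] A_j [g, u_κ]⁻¹, B_j ↦ [g, u_κ] B_j [g, u_κ]⁻¹ for j > i, where u_ν, u_κ are computed from the argument tuple and [x,y] = x y x⁻¹ y⁻¹. Then ρ is a left action of G on G^(n+2g), and u_κ is conjugation-equivariant: u_κ evaluated on ρ(g) of a tuple equals g · u_κ · g⁻¹ evaluated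 on that tuple. -/
/-- The lifted `G`-action associated to the curve `κ_{ν,n+2i} = b_i m_ν`: with
`u_τ = v_τ g_τ v_τ⁻¹` and `u_κ = B_i u_ν`, the map `ρ(g)` sending `v_ν ↦ g v_ν`,
`v_τ ↦ [g,u_ν] v_τ` for `τ > ν`, fixing `v_τ` for `τ < ν`, conjugating `A_j, B_j` by
`[g,u_ν]` for `j < i`, sending `A_i ↦ g A_i [g,u_ν]⁻¹`, `B_i ↦ g B_i g⁻¹`, and
conjugating `A_j, B_j` by `[g,u_κ]` for `j > i`, is a left action of `G` on
`G^(n+2g)`, and `u_κ` is conjugation-equivariant. -/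
theorem lifted_action_for_curve_kappa_nu_b {G : Type*} [Group G] {n m : ℕ}
    (gg : Fin n → G) (ν : Fin n) (i : Fin m)
    (u : (Fin n → G) → Fin n → G)
    (hu : ∀ v τ, u v τ = v τ * gg τ * (v τ)⁻¹)
    (uκ : ((Fin n → G) × (Fin m → G) × (Fin m → G)) → G)
    (huκ : ∀ (v : Fin n → G) (A B : Fin m → G), uκ (v, A, B) = B i * u v ν)
    (ρ : G → ((Fin n → G) × (Fin m → G) × (Fin m → G)) →
          ((Fin n → G) × (Fin m → G) × (Fin m → G)))
    (hρ : ∀ (g : G) (v : Fin n → G) (A B : Fin m → G),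
      ρ g (v, A, B) =
        (fun τ =>
          if τ = ν then g * v τ
          else if ν < τ then gcomm g (u v ν) * v τ
          else v τ,
         fun j =>
          if j < i then gcomm g (u v ν) * A j * (gcomm g (u v ν))⁻¹
          else if j = i then g * A j * (gcomm g (u v ν))⁻¹
          else gcomm g (uκ (v, A, B)) * A j * (gcomm g (uκ (v, A, B)))⁻¹,
         fun j =>
          if j < i then gcomm g (u v ν) * B j * (gcomm g (u v ν))⁻¹
          else if j = i then g * B j * g⁻¹
          else gcomm g (uκ (v, A, B)) * B j * (gcomm g (uκ (v, A, B)))⁻¹)) :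
    (∀ q, ρ 1 q = q) ∧ (∀ g₁ g₂ q, ρ (g₁ * g₂) q = ρ g₁ (ρ g₂ q)) ∧
    (∀ (g : G) (q : (Fin n → G) × (Fin m → G) × (Fin m → G)),
      uκ (ρ g q) = g * uκ q * g⁻¹) := by
  have hUν : ∀ (g : G) (v : Fin n → G),
      u (fun τ => if τ = ν then g * v τ else if ν < τ then gcomm g (u v ν) * v τ else v τ) ν
        = g * u v ν * g⁻¹ := by
    intro g v
    rw [hu, hu]
    simp [gcomm, mul_assoc]
  have hUκ : ∀ (g : G) (v : Fin n → G) (A B : Fin m → G),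
      uκ (ρ g (v, A, B)) = g * uκ (v, A, B) * g⁻¹ := by
    intro g v A B
    rw [hρ, huκ, huκ, hUν, if_neg (lt_irrefl i), if_pos rfl]
    group
  refine ⟨?_, ?_, ?_⟩
  · rintro ⟨v, A, B⟩
    rw [hρ]
    simp only [Prod.mk.injEq]
    refine ⟨funext fun τ => ?_, funext fun j => ?_, funext fun j => ?_⟩ <;>
      split_ifs <;> simp [gcomm]
  · rintro g₁ g₂ ⟨v, A, B⟩
    have hκ2 := hUκ g₂ v A B
    rw [hρ g₂] at hκ2 ⊢
    rw [hρ g₁, hρ (g₁ * g₂), hκ2, hUν]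
    simp only [Prod.mk.injEq]
    simp only [gcomm]
    refine ⟨funext fun τ => ?_, funext fun j => ?_, funext fun j => ?_⟩ <;>
      split_ifs <;> group
  · rintro g ⟨v, A, B⟩
    exact hUκ g v A B
end

section
/- Let G be a group, fix g₁, …, g_n ∈ G, and for a tuple (v₁, …, v_n, A₁, B₁, …, A_g, B_g) ∈ G^(n+2g) set u_ν = v_ν g_ν v_ν⁻¹. Fix 1 ≤ ν ≤ n and 1 ≤ i ≤ g, and set u_κ = A_i⁻¹ B_i⁻¹ A_i u_ν. For g ∈ G define ρ(g) : v_ν ↦ g v_ν; v_τ ↦ [g, u_ν] v_τ for τ > ν; v_τ unchanged for τ < ν; A_j ↦ [g,u_ν] A_j [g,u_ν]⁻¹ and B_j ↦ [g,u_ν] B_j [g,u_ν]⁻¹ for j < i; A_i ↦ [g, u_κ] A_i g⁻¹; B_i ↦ [g, u_κ] B_i [g, u_κ]⁻¹; and A_j ↦ [g, u_κ] A_j [g, u_κ]⁻¹, B_j ↦ [g, u_κ] B_j [g, u_κ]⁻¹ for j > i, where u_ν, u_κ are computed from the argument tuple and [x,y] = x y x⁻¹ y⁻¹. Then ρ is a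 left action of G on G^(n+2g), and u_κ is conjugation-equivariant: u_κ evaluated on ρ(g) of a tuple equals g · u_κ · g⁻¹ evaluated on that tuple. -/
/-- The lifted `G`-action associated to the curve `κ_{ν,n+2i−1} = a_i⁻¹ b_i⁻¹ a_i m_ν`:
with `u_τ = v_τ g_τ v_τ⁻¹` and `u_κ = A_i⁻¹ B_i⁻¹ A_i u_ν`, the map `ρ(g)` sending
`v_ν ↦ g v_ν`, `v_τ ↦ [g,u_ν] v_τ` for `τ > ν`, fixing `v_τ` for `τ < ν`, conjugating
`A_j, B_j` by `[g,u_ν]` for `j < i`, sending `A_i ↦ [g,u_κ] A_i g⁻¹`,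
`B_i ↦ [g,u_κ] B_i [g,u_κ]⁻¹`, and conjugating `A_j, B_j` by `[g,u_κ]` for `j > i`,
is a left action of `G` on `G^(n+2g)`, and `u_κ` is conjugation-equivariant. -/
theorem lifted_action_for_curve_kappa_nu_delta {G : Type*} [Group G] {n m : ℕ}
    (gg : Fin n → G) (ν : Fin n) (i : Fin m)
    (u : (Fin n → G) → Fin n → G)
    (hu : ∀ v τ, u v τ = v τ * gg τ * (v τ)⁻¹)
    (uκ : ((Fin n → G) × (Fin m → G) × (Fin m → G)) → G)
    (huκ : ∀ (v : Fin n → G) (A B : Fin m → G),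
      uκ (v, A, B) = (A i)⁻¹ * (B i)⁻¹ * A i * u v ν)
    (ρ : G → ((Fin n → G) × (Fin m → G) × (Fin m → G)) →
          ((Fin n → G) × (Fin m → G) × (Fin m → G)))
    (hρ : ∀ (g : G) (v : Fin n → G) (A B : Fin m → G),
      ρ g (v, A, B) =
        (fun τ =>
          if τ = ν then g * v τ
          else if ν < τ then gcomm g (u v ν) * v τ
          else v τ,
         fun j =>
          if j < i then gcomm g (u v ν) * A j * (gcomm g (u v ν))⁻¹
          else if j = i then gcomm g (uκ (v, A, B)) * A j * g⁻¹
          else gcomm g (uκ (v, A, B)) * A j * (gcomm g (uκ (v, A, B)))⁻¹,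
         fun j =>
          if j < i then gcomm g (u v ν) * B j * (gcomm g (u v ν))⁻¹
          else gcomm g (uκ (v, A, B)) * B j * (gcomm g (uκ (v, A, B)))⁻¹)) :
    (∀ q, ρ 1 q = q) ∧ (∀ g₁ g₂ q, ρ (g₁ * g₂) q = ρ g₁ (ρ g₂ q)) ∧
    (∀ (g : G) (q : (Fin n → G) × (Fin m → G) × (Fin m → G)),
      uκ (ρ g q) = g * uκ q * g⁻¹) := by

  have hgc1 : ∀ x : G, gcomm 1 x = 1 := by intro x; simp [gcomm]
  have hkey : ∀ (g : G) (v : Fin n → G) (A B : Fin m → G),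
      uκ (ρ g (v, A, B)) = g * uκ (v, A, B) * g⁻¹ := by
    intro g v A B
    rw [hρ, huκ, huκ, hu, hu]
    simp only [lt_irrefl, if_false, if_pos rfl, ite_true, eq_self_iff_true]
    simp only [gcomm]
    group
  refine ⟨?_, ?_, fun g q => by obtain ⟨v, A, B⟩ := q; exact hkey g v A B⟩
  · rintro ⟨v, A, B⟩
    rw [hρ, Prod.mk.injEq, Prod.mk.injEq]
    refine ⟨funext fun τ => ?_, funext fun j => ?_, funext fun j => ?_⟩ <;>
      simp [hgc1]
  · rintro g₁ g₂ ⟨v, A, B⟩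
    rw [hρ g₂, hρ g₁, hρ (g₁ * g₂), Prod.mk.injEq, Prod.mk.injEq]
    simp only [huκ, hu, lt_irrefl, if_false, if_pos rfl, ite_true, eq_self_iff_true]
    refine ⟨funext fun τ => ?_, funext fun j => ?_, funext fun j => ?_⟩ <;>
      split_ifs <;> (try simp only [gcomm]) <;> group
end

section
/- Let G be a group, fix g₁, …, g_n ∈ G, and for a tuple (v₁, …, v_n, A₁, B₁, …, A_g, B_g) ∈ G^(n+2g) set u_i = v_i g_i v_i⁻¹ and K_j = B_j A_j⁻¹ B_j⁻¹ A_j. Fix index sets {i₁ < … < i_r} ⊆ {1,…,n} and {j₁ < … < j_s} ⊆ {1,…,g}, and set u_γ = K_{j_s} ⋯ K_{j_1} · u_{i_r} ⋯ u_{i_1}. For g ∈ G define ρ(g) : v_{i_l} ↦ g v_{i_l} for l = 1,…,r; A_{j_l} ↦ g A_{j_l} g⁻¹ and B_{j_l} ↦ g B_{j_l} g⁻¹ for l = 1,…,s; v_i ↦ [g, u_{i_l} ⋯ u_{i_1}] v_i for each i with i_l < i < i_{l+1} (l = 0,…,r, with empty product for l = 0 and i_{r+1} = n+1); and A_j ↦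 c_l A_j c_l⁻¹, B_j ↦ c_l B_j c_l⁻¹ with c_l = [g, K_{j_l} ⋯ K_{j_1} u_{i_r} ⋯ u_{i_1}] for each j with j_l < j < j_{l+1} (l = 0,…,s, with K-product empty for l = 0 and j_{s+1} = g+1), where all words are computed from the argument tuple and [x,y] = x y x⁻¹ y⁻¹. Then ρ is a left action of G on G^(n+2g), and u_γ is conjugation-equivariant: u_γ evaluated on ρ(g) of a tuple equals g · u_γ · g⁻¹ evaluated on that tuple. -/
/-- The puncture holonomy component `u_i = v_i g_i v_i⁻¹`. -/
def puncU {G : Type*} [Group G] {n : ℕ} (gg : Fin n → G) (v : Fin n → G) (i : Fin n) : G :=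
  v i * gg i * (v i)⁻¹

/-- The handle word `K_j = B_j A_j⁻¹ B_j⁻¹ A_j`. -/
def handleK {G : Type*} [Group G] {m : ℕ} (A B : Fin m → G) (j : Fin m) : G :=
  B j * (A j)⁻¹ * (B j)⁻¹ * A j

/-- The ordered (decreasing-index) product `f(l-1) ⋯ f(1) f(0)` of the first `l`
values of `f`. -/
def prefixProd {G : Type*} [Group G] {r : ℕ} (f : Fin r → G) (l : ℕ) : G :=
  ((List.ofFn fun t : Fin r => if (t : ℕ) < l then f t else 1).reverse).prod

lemma prefixProd_conj {G : Type*} [Group G] {r : ℕ} (c : G) (f f' : Fin r → G)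
    (h : ∀ t, f' t = c * f t * c⁻¹) (l : ℕ) :
    prefixProd f' l = c * prefixProd f l * c⁻¹ := by
  unfold prefixProd
  have h2 : (fun t : Fin r => if (t:ℕ) < l then f' t else 1)
      = ((MulAut.conj c).toMonoidHom : G →* G) ∘
        (fun t : Fin r => if (t:ℕ) < l then f t else 1) := by
    funext t
    by_cases ht : (t:ℕ) < l <;> simp [ht, h t]
  rw [h2, ← List.map_ofFn, ← List.map_reverse, ← map_list_prod]
  simp

lemma gcomm_mul_eq {G : Type*} [Group G] (g₁ g₂ P : G) :
    gcomm (g₁ * g₂) P = gcomm g₁ (g₂ * P * g₂⁻¹) * gcomm g₂ P := by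
  simp only [gcomm]; group

/-- The lifted `G`-action associated to the separating curve
`γ^{i₁…i_r j₁…j_s} = [b_{j_s}, a_{j_s}⁻¹] ⋯ [b_{j_1}, a_{j_1}⁻¹] · m_{i_r} ⋯ m_{i_1}`,
with holonomy component `u_γ = K_{j_s} ⋯ K_{j_1} · u_{i_r} ⋯ u_{i_1}`, is a left
action of `G` on `G^(n+2g)`, and `u_γ` is conjugation-equivariant. -/
theorem lifted_action_for_separating_curve {G : Type*} [Group G] {n m r s : ℕ}
    (gg : Fin n → G)
    (ι : Fin r → Fin n) (hι : StrictMono ι)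
    (κ : Fin s → Fin m) (hκ : StrictMono κ)
    (uγ : ((Fin n → G) × (Fin m → G) × (Fin m → G)) → G)
    (huγ : ∀ (v : Fin n → G) (A B : Fin m → G),
      uγ (v, A, B) =
        prefixProd (fun t => handleK A B (κ t)) s *
        prefixProd (fun t => puncU gg v (ι t)) r)
    (ρ : G → ((Fin n → G) × (Fin m → G) × (Fin m → G)) →
          ((Fin n → G) × (Fin m → G) × (Fin m → G)))
    (hρ : ∀ (g : G) (v : Fin n → G) (A B : Fin m → G),
      ρ g (v, A, B) =
        (fun i =>
          if ∃ t, ι t = i then g * v i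
          else
            gcomm g (prefixProd (fun t => puncU gg v (ι t))
              ((Finset.univ.filter fun t : Fin r => ι t < i).card)) * v i,
         fun j =>
          if ∃ t, κ t = j then g * A j * g⁻¹
          else
            gcomm g (prefixProd (fun t => handleK A B (κ t))
                  ((Finset.univ.filter fun t : Fin s => κ t < j).card) *
                prefixProd (fun t => puncU gg v (ι t)) r) * A j *
              (gcomm g (prefixProd (fun t => handleK A B (κ t))
                  ((Finset.univ.filter fun t : Fin s => κ t < j).card) *
                prefixProd (fun t => puncU gg v (ι t)) r))⁻¹,
         fun j =>
          if ∃ t, κ t = j then g * B j * g⁻¹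
          else
            gcomm g (prefixProd (fun t => handleK A B (κ t))
                  ((Finset.univ.filter fun t : Fin s => κ t < j).card) *
                prefixProd (fun t => puncU gg v (ι t)) r) * B j *
              (gcomm g (prefixProd (fun t => handleK A B (κ t))
                  ((Finset.univ.filter fun t : Fin s => κ t < j).card) *
                prefixProd (fun t => puncU gg v (ι t)) r))⁻¹)) :
    (∀ q, ρ 1 q = q) ∧ (∀ g₁ g₂ q, ρ (g₁ * g₂) q = ρ g₁ (ρ g₂ q)) ∧
    (∀ (g : G) (q : (Fin n → G) × (Fin m → G) × (Fin m → G)),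
      uγ (ρ g q) = g * uγ q * g⁻¹) := by
  refine ⟨?_, ?_, ?_⟩
  · rintro ⟨v, A, B⟩
    rw [hρ]
    refine Prod.ext ?_ (Prod.ext ?_ ?_) <;> funext i <;>
      · dsimp only
        split <;> simp [gcomm] <;> group
  · intro g₁ g₂ q
    obtain ⟨v, A, B⟩ := q
    have hP : ∀ l, prefixProd (fun t => puncU gg
        (fun i =>
          if ∃ t, ι t = i then g₂ * v i
          else
            gcomm g₂ (prefixProd (fun t => puncU gg v (ι t))
              ((Finset.univ.filter fun t : Fin r => ι t < i).card)) * v i) (ι t)) l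
        = g₂ * prefixProd (fun t => puncU gg v (ι t)) l * g₂⁻¹ := fun l =>
      prefixProd_conj _ _ _ (fun t => by
        simp only [puncU]; rw [if_pos ⟨t, rfl⟩]; group) l
    have hQ : ∀ l, prefixProd (fun t => handleK
        (fun j =>
          if ∃ t, κ t = j then g₂ * A j * g₂⁻¹
          else
            gcomm g₂ (prefixProd (fun t => handleK A B (κ t))
                  ((Finset.univ.filter fun t : Fin s => κ t < j).card) *
                prefixProd (fun t => puncU gg v (ι t)) r) * A j *
              (gcomm g₂ (prefixProd (fun t => handleK A B (κ t))
                  ((Finset.univ.filter fun t : Fin s => κ t < j).card) *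
                prefixProd (fun t => puncU gg v (ι t)) r))⁻¹)
        (fun j =>
          if ∃ t, κ t = j then g₂ * B j * g₂⁻¹
          else
            gcomm g₂ (prefixProd (fun t => handleK A B (κ t))
                  ((Finset.univ.filter fun t : Fin s => κ t < j).card) *
                prefixProd (fun t => puncU gg v (ι t)) r) * B j *
              (gcomm g₂ (prefixProd (fun t => handleK A B (κ t))
                  ((Finset.univ.filter fun t : Fin s => κ t < j).card) *
                prefixProd (fun t => puncU gg v (ι t)) r))⁻¹) (κ t)) l
        = g₂ * prefixProd (fun t => handleK A B (κ t)) l * g₂⁻¹ := fun l =>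
      prefixProd_conj _ _ _ (fun t => by
        simp only [handleK]; rw [if_pos ⟨t, rfl⟩, if_pos ⟨t, rfl⟩]; group) l
    rw [hρ g₂ v A B, hρ (g₁ * g₂) v A B, hρ g₁]
    refine Prod.ext ?_ (Prod.ext ?_ ?_)
    · funext i
      dsimp only
      by_cases h : ∃ t, ι t = i
      · simp only [if_pos h, mul_assoc]
      · simp only [if_neg h]
        rw [hP, gcomm_mul_eq, mul_assoc]
    · funext j
      dsimp only
      by_cases h : ∃ t, κ t = j
      · simp only [if_pos h]; group
      · simp only [if_neg h]
        rw [hP, hQ]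
        simp only [gcomm]; group
    · funext j
      dsimp only
      by_cases h : ∃ t, κ t = j
      · simp only [if_pos h]; group
      · simp only [if_neg h]
        rw [hP, hQ]
        simp only [gcomm]; group
  · intro g q
    obtain ⟨v, A, B⟩ := q
    have h1 : ∀ t : Fin r, puncU gg
        (fun i =>
          if ∃ t, ι t = i then g * v i
          else
            gcomm g (prefixProd (fun t => puncU gg v (ι t))
              ((Finset.univ.filter fun t : Fin r => ι t < i).card)) * v i) (ι t)
        = g * puncU gg v (ι t) * g⁻¹ := fun t => by
      simp only [puncU]; rw [if_pos ⟨t, rfl⟩]; group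
    have h2 : ∀ t : Fin s, handleK
        (fun j =>
          if ∃ t, κ t = j then g * A j * g⁻¹
          else
            gcomm g (prefixProd (fun t => handleK A B (κ t))
                  ((Finset.univ.filter fun t : Fin s => κ t < j).card) *
                prefixProd (fun t => puncU gg v (ι t)) r) * A j *
              (gcomm g (prefixProd (fun t => handleK A B (κ t))
                  ((Finset.univ.filter fun t : Fin s => κ t < j).card) *
                prefixProd (fun t => puncU gg v (ι t)) r))⁻¹)
        (fun j =>
          if ∃ t, κ t = j then g * B j * g⁻¹
          else
            gcomm g (prefixProd (fun t => handleK A B (κ t))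
                  ((Finset.univ.filter fun t : Fin s => κ t < j).card) *
                prefixProd (fun t => puncU gg v (ι t)) r) * B j *
              (gcomm g (prefixProd (fun t => handleK A B (κ t))
                  ((Finset.univ.filter fun t : Fin s => κ t < j).card) *
                prefixProd (fun t => puncU gg v (ι t)) r))⁻¹) (κ t)
        = g * handleK A B (κ t) * g⁻¹ := fun t => by
      simp only [handleK]; rw [if_pos ⟨t, rfl⟩, if_pos ⟨t, rfl⟩]; group
    rw [hρ g v A B, huγ, huγ, prefixProd_conj _ _ _ h1, prefixProd_conj _ _ _ h2]
    group
end

section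
/- Let G be a group, h ∈ G, n ≥ 2, V a vector space (over any field), and for 1 ≤ i ≤ n−1 let β_i : G^n → G^n be the bijection with (β_i v)_i = v_{i+1}, (β_i v)_{i+1} = (v_{i+1} h v_{i+1}⁻¹)⁻¹ v_i and other components unchanged, and let τ_i : V^{⊗n} → V^{⊗n} be the linear map exchanging the i-th and (i+1)-th tensor factors. On the space of functions ψ : G^n → V^{⊗n} define L_i ψ = τ_i ∘ ψ ∘ β_i⁻¹. Then the operators L_i are linear bijections satisfying the braid relations L_i L_j = L_j L_i for |i − j| ≥ 2 and L_i L_{i+1} L_i = L_{i+1} L_i L_{i+1}, so they define a representation of the Artin braid group on n strands on the space of functions G^n → V^{⊗n}. -/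
open scoped TensorProduct

/-- The braid generator `β_i` on `G^n` (0-indexed: it acts on the components `i` and
`i+1`): `(β_i v)_i = v_{i+1}`, `(β_i v)_{i+1} = (v_{i+1} h v_{i+1}⁻¹)⁻¹ v_i`. -/
def braidN {G : Type*} [Group G] (h : G) {n : ℕ} (i : ℕ) (v : Fin n → G) : Fin n → G :=
  fun t =>
    if h1 : (t : ℕ) = i then
      if h2 : i + 1 < n then v ⟨i + 1, h2⟩ else v t
    else if h3 : (t : ℕ) = i + 1 then
      (v t * h * (v t)⁻¹)⁻¹ * v ⟨i, by have := t.isLt; omega⟩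
    else v t

/-- The inverse of the braid generator `β_i`. -/
def braidInvN {G : Type*} [Group G] (h : G) {n : ℕ} (i : ℕ) (w : Fin n → G) : Fin n → G :=
  fun t =>
    if h1 : (t : ℕ) = i then
      if h2 : i + 1 < n then (w t * h * (w t)⁻¹) * w ⟨i + 1, h2⟩ else w t
    else if h3 : (t : ℕ) = i + 1 then
      w ⟨i, by have := t.isLt; omega⟩
    else w t

/-- The flip `τ_i` of the `i`-th and `(i+1)`-th factors of the `n`-fold tensor power
of `V`. -/
noncomputable def flipTensor (𝕜 : Type*) [Field 𝕜] (V : Type*) [AddCommGroup V]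
    [Module 𝕜 V] {n : ℕ} (i : ℕ) :
    (⨂[𝕜] _ : Fin n, V) →ₗ[𝕜] (⨂[𝕜] _ : Fin n, V) :=
  if h : i + 1 < n then
    (PiTensorProduct.reindex 𝕜 (fun _ : Fin n => V)
      (Equiv.swap ⟨i, Nat.lt_of_succ_lt h⟩ ⟨i + 1, h⟩)).toLinearMap
  else LinearMap.id

/-- The operator `L_i ψ = τ_i ∘ ψ ∘ β_i⁻¹` on functions `ψ : G^n → V^{⊗n}`. -/
noncomputable def braidOp (𝕜 : Type*) [Field 𝕜] (V : Type*) [AddCommGroup V]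
    [Module 𝕜 V] {G : Type*} [Group G] (h : G) {n : ℕ} (i : ℕ)
    (ψ : (Fin n → G) → ⨂[𝕜] _ : Fin n, V) : (Fin n → G) → ⨂[𝕜] _ : Fin n, V :=
  fun v => flipTensor 𝕜 V i (ψ (braidInvN h i v))

section GSide
variable {G : Type*} [Group G] (h : G) {n : ℕ}

lemma braidInvN_braidN {i : ℕ} (hi : i + 1 < n) (v : Fin n → G) :
    braidInvN h i (braidN h i v) = v := by
  funext t
  obtain ⟨tv, htv⟩ := t
  by_cases h0 : tv = i
  · subst h0
    simp [braidInvN, braidN, hi, show tv + 1 ≠ tv from by omega]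
    group
  by_cases h1 : tv = i + 1
  · subst h1
    simp [braidInvN, braidN, hi, show i + 1 ≠ i from by omega]
  · simp [braidInvN, braidN, h0, h1]

lemma braidN_braidInvN {i : ℕ} (hi : i + 1 < n) (w : Fin n → G) :
    braidN h i (braidInvN h i w) = w := by
  funext t
  obtain ⟨tv, htv⟩ := t
  by_cases h0 : tv = i
  · subst h0
    simp [braidInvN, braidN, hi, show tv + 1 ≠ tv from by omega]
  by_cases h1 : tv = i + 1
  · subst h1
    simp [braidInvN, braidN, hi, show i + 1 ≠ i from by omega]
    group
  · simp [braidInvN, braidN, h0, h1]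

lemma braidInvN_comm {i j : ℕ} (hij : i + 2 ≤ j) (v : Fin n → G) :
    braidInvN h j (braidInvN h i v) = braidInvN h i (braidInvN h j v) := by
  funext t
  obtain ⟨tv, htv⟩ := t
  by_cases h0 : tv = i
  · subst h0
    simp [braidInvN, show tv ≠ j from by omega, show tv ≠ j + 1 from by omega,
      show tv + 1 ≠ j from by omega, show tv + 1 ≠ j + 1 from by omega,
      show tv + 1 ≠ tv from by omega]
  by_cases h1 : tv = i + 1
  · subst h1
    simp [braidInvN, show i + 1 ≠ j from by omega, show i + 1 ≠ j + 1 from by omega,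
      show i + 1 ≠ i from by omega, show i ≠ j from by omega, show i ≠ j + 1 from by omega]
  by_cases h2 : tv = j
  · subst h2
    simp [braidInvN, h0, h1, show tv + 1 ≠ i from by omega, show tv + 1 ≠ i + 1 from by omega,
      show tv + 1 ≠ tv from by omega]
  by_cases h3 : tv = j + 1
  · subst h3
    simp [braidInvN, h0, h1, show j + 1 ≠ j from by omega, show j ≠ i from by omega,
      show j ≠ i + 1 from by omega]
  · simp [braidInvN, h0, h1, h2, h3]

lemma braidInvN_braid {i : ℕ} (hi : i + 2 < n) (v : Fin n → G) :
    braidInvN h i (braidInvN h (i+1) (braidInvN h i v)) =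
      braidInvN h (i+1) (braidInvN h i (braidInvN h (i+1) v)) := by
  have hi1 : i + 1 < n := by omega
  funext t
  obtain ⟨tv, htv⟩ := t
  by_cases h0 : tv = i
  · subst h0
    simp [braidInvN, hi, hi1, show tv + 1 ≠ tv from by omega, show tv ≠ tv + 1 from by omega,
      show tv + 1 + 1 ≠ tv from by omega, show tv + 1 + 1 ≠ tv + 1 from by omega,
      show tv ≠ tv + 1 + 1 from by omega]
    group
  by_cases h1 : tv = i + 1
  · subst h1
    simp [braidInvN, hi, hi1, show i + 1 ≠ i from by omega, show i ≠ i + 1 from by omega,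
      show i + 1 + 1 ≠ i from by omega, show i + 1 + 1 ≠ i + 1 from by omega,
      show i ≠ i + 1 + 1 from by omega]
  by_cases h2 : tv = i + 2
  · subst h2
    simp [braidInvN, hi, hi1, show i + 2 ≠ i from by omega, show i + 2 = i + 1 + 1 from by omega,
      show i + 1 ≠ i from by omega, show i ≠ i + 1 from by omega,
      show i + 1 + 1 ≠ i + 1 from by omega, show i + 1 + 1 ≠ i from by omega,
      show i ≠ i + 1 + 1 from by omega]
  · simp [braidInvN, h0, h1, show tv ≠ i + 1 + 1 from by omega]

end GSide

lemma swap_trans_comm {α : Type*} [DecidableEq α] {a b c d : α}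
    (hac : a ≠ c) (had : a ≠ d) (hbc : b ≠ c) (hbd : b ≠ d) :
    (Equiv.swap a b).trans (Equiv.swap c d) = (Equiv.swap c d).trans (Equiv.swap a b) := by
  have hdis : (Equiv.swap a b).Disjoint (Equiv.swap c d) := by
    intro x
    by_cases hxa : x = a
    · subst hxa; right; exact Equiv.swap_apply_of_ne_of_ne hac had
    by_cases hxb : x = b
    · subst hxb; right; exact Equiv.swap_apply_of_ne_of_ne hbc hbd
    · left; exact Equiv.swap_apply_of_ne_of_ne hxa hxb
  rw [← Equiv.Perm.mul_def, ← Equiv.Perm.mul_def]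
  exact hdis.commute.symm

lemma swap_trans_braid {α : Type*} [DecidableEq α] {a b c : α}
    (hab : a ≠ b) (hbc : b ≠ c) (hac : a ≠ c) :
    ((Equiv.swap a b).trans (Equiv.swap b c)).trans (Equiv.swap a b)
      = ((Equiv.swap b c).trans (Equiv.swap a b)).trans (Equiv.swap b c) := by
  have h1 := Equiv.swap_mul_swap_mul_swap (x := c) (y := b) (z := a) hbc.symm hac.symm
  have h2 := Equiv.swap_mul_swap_mul_swap (x := a) (y := b) (z := c) hab hac
  rw [Equiv.swap_comm b a, Equiv.swap_comm c b] at h1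
  rw [← Equiv.Perm.mul_def, ← Equiv.Perm.mul_def, ← Equiv.Perm.mul_def, ← Equiv.Perm.mul_def]
  rw [← mul_assoc, ← mul_assoc, h1, h2, Equiv.swap_comm]

section TSide
variable (𝕜 : Type*) [Field 𝕜] (V : Type*) [AddCommGroup V] [Module 𝕜 V] {n : ℕ}

lemma reindex_reindex' (e e' : Fin n ≃ Fin n) (x : ⨂[𝕜] _ : Fin n, V) :
    PiTensorProduct.reindex 𝕜 (fun _ : Fin n => V) e'
        (PiTensorProduct.reindex 𝕜 (fun _ : Fin n => V) e x)
      = PiTensorProduct.reindex 𝕜 (fun _ : Fin n => V) (e.trans e') x :=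
  PiTensorProduct.reindex_reindex e e' x

lemma flipTensor_flipTensor (i : ℕ) (x : ⨂[𝕜] _ : Fin n, V) :
    flipTensor 𝕜 V i (flipTensor 𝕜 V i x) = x := by
  unfold flipTensor
  split_ifs with hh
  · simp only [LinearEquiv.coe_coe, reindex_reindex', Equiv.swap_swap,
      PiTensorProduct.reindex_refl, LinearEquiv.refl_apply]
  · rfl

lemma flipTensor_comm {i j : ℕ} (hij : i + 2 ≤ j) (x : ⨂[𝕜] _ : Fin n, V) :
    flipTensor 𝕜 V i (flipTensor 𝕜 V j x) = flipTensor 𝕜 V j (flipTensor 𝕜 V i x) := by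
  unfold flipTensor
  split_ifs with h1 h2 h2
  · simp only [LinearEquiv.coe_coe, reindex_reindex']
    rw [swap_trans_comm (by simp only [ne_eq, Fin.mk.injEq]; omega)
      (by simp only [ne_eq, Fin.mk.injEq]; omega) (by simp only [ne_eq, Fin.mk.injEq]; omega)
      (by simp only [ne_eq, Fin.mk.injEq]; omega)]
  · rfl
  · rfl
  · rfl

lemma flipTensor_braid {i : ℕ} (hi : i + 2 < n) (x : ⨂[𝕜] _ : Fin n, V) :
    flipTensor 𝕜 V i (flipTensor 𝕜 V (i+1) (flipTensor 𝕜 V i x))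
      = flipTensor 𝕜 V (i+1) (flipTensor 𝕜 V i (flipTensor 𝕜 V (i+1) x)) := by
  have h1 : i + 1 < n := by omega
  have h2 : i + 1 + 1 < n := by omega
  unfold flipTensor
  simp only [dif_pos h1, dif_pos h2, LinearEquiv.coe_coe, reindex_reindex']
  rw [swap_trans_braid (by simp only [ne_eq, Fin.mk.injEq]; omega)
    (by simp only [ne_eq, Fin.mk.injEq]; omega) (by simp only [ne_eq, Fin.mk.injEq]; omega)]

end TSide

set_option maxHeartbeats 1000000 in
/-- The operators `L_i ψ = τ_i ∘ ψ ∘ β_i⁻¹` are linear bijections satisfying the Artin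
braid relations, hence define a representation of the braid group on `n` strands on
the space of functions `G^n → V^{⊗n}`. -/
theorem braid_group_representation_on_states
    (𝕜 : Type*) [Field 𝕜] (V : Type*) [AddCommGroup V] [Module 𝕜 V]
    {G : Type*} [Group G] (h : G) {n : ℕ} (hn : 2 ≤ n) :
    -- `braidInvN` really is the inverse of the bijection `β_i`
    (∀ i : ℕ, i + 1 < n →
      Function.LeftInverse (braidInvN h (n := n) i) (braidN h i) ∧
      Function.RightInverse (braidInvN h (n := n) i) (braidN h i)) ∧
    -- each `L_i` is linear ...
    (∀ (i : ℕ) (a : 𝕜) (ψ χ : (Fin n → G) → ⨂[𝕜] _ : Fin n, V),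
      braidOp 𝕜 V h (n := n) i (a • ψ + χ)
        = a • braidOp 𝕜 V h i ψ + braidOp 𝕜 V h i χ) ∧
    -- ... and bijective ...
    (∀ i : ℕ, i + 1 < n → Function.Bijective (braidOp 𝕜 V h (n := n) i)) ∧
    -- ... and the `L_i` satisfy the braid relations
    (∀ i j : ℕ, i + 1 < n → j + 1 < n → (i + 2 ≤ j ∨ j + 2 ≤ i) →
      ∀ ψ : (Fin n → G) → ⨂[𝕜] _ : Fin n, V,
        braidOp 𝕜 V h i (braidOp 𝕜 V h j ψ) = braidOp 𝕜 V h j (braidOp 𝕜 V h i ψ)) ∧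
    (∀ i : ℕ, i + 2 < n →
      ∀ ψ : (Fin n → G) → ⨂[𝕜] _ : Fin n, V,
        braidOp 𝕜 V h i (braidOp 𝕜 V h (i + 1) (braidOp 𝕜 V h i ψ))
          = braidOp 𝕜 V h (i + 1) (braidOp 𝕜 V h i (braidOp 𝕜 V h (i + 1) ψ))) := by
  
  refine ⟨fun i hi => ⟨fun v => braidInvN_braidN h hi v, fun w => braidN_braidInvN h hi w⟩,
    ?_, ?_, ?_, ?_⟩
  · intro i a ψ χ
    funext v
    simp [braidOp, map_add, map_smul]
  · intro i hi
    refine Function.bijective_iff_has_inverse.mpr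
      ⟨fun ψ v => flipTensor 𝕜 V i (ψ (braidN h i v)), fun ψ => ?_, fun ψ => ?_⟩
    · funext v
      simp [braidOp, braidInvN_braidN h hi, flipTensor_flipTensor]
    · funext v
      simp [braidOp, braidN_braidInvN h hi, flipTensor_flipTensor]
  · have key : ∀ i j : ℕ, i + 2 ≤ j →
        ∀ ψ : (Fin n → G) → ⨂[𝕜] _ : Fin n, V,
          braidOp 𝕜 V h i (braidOp 𝕜 V h j ψ) = braidOp 𝕜 V h j (braidOp 𝕜 V h i ψ) := by
      intro i j hij ψ
      funext v
      simp only [braidOp]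
      rw [braidInvN_comm h hij, flipTensor_comm 𝕜 V hij]
    intro i j _ _ hij ψ
    rcases hij with hij | hij
    · exact key i j hij ψ
    · exact (key j i hij ψ).symm
  · intro i hi ψ
    funext v
    simp only [braidOp]
    rw [braidInvN_braid h hi, flipTensor_braid 𝕜 V hi]
end

section
/- Let G be a locally compact topological group with a left Haar measure dz, let n ≥ 1, fix 1 ≤ i ≤ n and h ∈ G, and let V be a complex Banach space. For a continuous compactly supported F : G × G → ℂ define the operator Π_i(F) on bounded measurable functions ψ : G^n → V by (Π_i(F)ψ)(v₁, …, v_n) = ∫_G F(z, v_i h v_i⁻¹) ψ(v₁, …, v_{i−1}, z⁻¹ v_i, v_{i+1}, …, v_n) dz. Then Π_i is multiplicative for the quantum-double multiplication: Π_i(F₁ • F₂)ψ = Π_i(F₁)(Π_i(F₂)ψ) pointwise for all continuous compactly supported F₁, F₂ : G × G → ℂ and all bounded measurable ψ, where (F₁ • F₂)(v,u) = ∫_G F₁(z,u) F₂(z⁻¹v, z⁻¹uz) dz. -/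
open MeasureTheory Pointwise

/-- The representation of the quantum double attached to the `i`-th puncture with
conjugacy-class representative `h`:
`(Π_i(F)ψ)(v₁,…,v_n) = ∫_G F(z, v_i h v_i⁻¹) ψ(v₁,…,z⁻¹v_i,…,v_n) dz`. -/
noncomputable def qdRepPuncture {G : Type*} [Group G] [MeasurableSpace G]
    (μ : Measure G) {n : ℕ} (i : Fin n) (h : G) {V : Type*}
    [NormedAddCommGroup V] [NormedSpace ℂ V]
    (F : G × G → ℂ) (ψ : (Fin n → G) → V) : (Fin n → G) → V :=
  fun v => ∫ z, F (z, v i * h * (v i)⁻¹) • ψ (Function.update v i (z⁻¹ * v i)) ∂μ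


private theorem qdRep_aux
    {G : Type*} [Group G] [TopologicalSpace G] [IsTopologicalGroup G]
    [LocallyCompactSpace G] [MeasurableSpace G] [BorelSpace G]
    (μ : Measure G) [μ.IsHaarMeasure]
    {n : ℕ} (i : Fin n) (h : G)
    {V : Type*} [NormedAddCommGroup V] [NormedSpace ℂ V] [CompleteSpace V]
    (F₁ F₂ : G × G → ℂ)
    (hF₁c : Continuous F₁) (hF₁s : HasCompactSupport F₁)
    (hF₂c : Continuous F₂) (hF₂s : HasCompactSupport F₂)
    (ψ : (Fin n → G) → V) (hψ_meas : StronglyMeasurable ψ)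
    (C : ℝ) (hψ_bdd : ∀ v, ‖ψ v‖ ≤ C)
    (v : Fin n → G) :
    (∫ w, (∫ z, F₁ (z, v i * h * (v i)⁻¹) * F₂ (z⁻¹ * w, z⁻¹ * (v i * h * (v i)⁻¹) * z) ∂μ) •
        ψ (Function.update v i (w⁻¹ * v i)) ∂μ)
      = ∫ z, F₁ (z, v i * h * (v i)⁻¹) •
          (∫ w, F₂ (w, (z⁻¹ * v i) * h * (z⁻¹ * v i)⁻¹) •
            ψ (Function.update v i (w⁻¹ * (z⁻¹ * v i))) ∂μ) ∂μ := by
  set u := v i * h * (v i)⁻¹ with hu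
  set φ : G → V := fun w => ψ (Function.update v i (w⁻¹ * v i)) with hφ
  have hφm : Measurable fun w : G => Function.update v i (w⁻¹ * v i) := by
    apply measurable_pi_lambda
    intro j
    rcases eq_or_ne j i with rfl | hj
    · simp only [Function.update_self]
      exact (continuous_inv.mul continuous_const).measurable
    · simp only [Function.update_of_ne hj]
      exact measurable_const
  have hφ_meas : StronglyMeasurable φ := hψ_meas.comp_measurable hφm
  have hφ_bdd : ∀ w, ‖φ w‖ ≤ C := fun w => hψ_bdd _
  set A : Set G := closure (Prod.fst '' tsupport F₁) with hA
  set B : Set G := closure (Prod.fst '' tsupport F₂) with hB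
  have hAc : IsCompact A := (hF₁s.image continuous_fst).closure
  have hBc : IsCompact B := (hF₂s.image continuous_fst).closure
  set S : Set G := closure (A * B) with hS
  have hSc : IsCompact S := (hAc.mul hBc).closure
  have hzA : ∀ (z : G) (u' : G), z ∉ A → F₁ (z, u') = 0 := by
    intro z u' hz
    by_contra h0
    exact hz (subset_closure ⟨(z, u'), subset_tsupport _ h0, rfl⟩)
  have hKS : ∀ (z w : G), w ∉ S → F₁ (z, u) * F₂ (z⁻¹ * w, z⁻¹ * u * z) = 0 := by
    intro z w hw
    by_contra h0
    have h1 : F₁ (z, u) ≠ 0 := left_ne_zero_of_mul h0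
    have h2 : F₂ (z⁻¹ * w, z⁻¹ * u * z) ≠ 0 := right_ne_zero_of_mul h0
    have hzA' : z ∈ A := subset_closure ⟨(z, u), subset_tsupport _ h1, rfl⟩
    have hzB' : z⁻¹ * w ∈ B := subset_closure ⟨_, subset_tsupport _ h2, rfl⟩
    exact hw (subset_closure (by simpa using Set.mul_mem_mul hzA' hzB'))
  haveI : Fact (μ A < ⊤) := ⟨hAc.measure_lt_top⟩
  haveI : Fact (μ S < ⊤) := ⟨hSc.measure_lt_top⟩
  obtain ⟨M₁, hM₁⟩ := hF₁c.bounded_above_of_compact_support hF₁s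
  obtain ⟨M₂, hM₂⟩ := hF₂c.bounded_above_of_compact_support hF₂s
  have hM₁0 : 0 ≤ M₁ := (norm_nonneg (F₁ (1, 1))).trans (hM₁ (1, 1))
  have hM₂0 : 0 ≤ M₂ := (norm_nonneg (F₂ (1, 1))).trans (hM₂ (1, 1))
  have hint : Integrable
      (Function.uncurry fun w z => (F₁ (z, u) * F₂ (z⁻¹ * w, z⁻¹ * u * z)) • φ w)
      ((μ.restrict S).prod (μ.restrict A)) := by
    have hK : Continuous fun p : G × G => F₁ (p.2, u) * F₂ (p.2⁻¹ * p.1, p.2⁻¹ * u * p.2) := by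
      apply Continuous.mul
      · exact hF₁c.comp (continuous_snd.prodMk continuous_const)
      · exact hF₂c.comp (((continuous_snd.inv).mul continuous_fst).prodMk
          (((continuous_snd.inv).mul continuous_const).mul continuous_snd))
    have hKcs : HasCompactSupport
        fun p : G × G => F₁ (p.2, u) * F₂ (p.2⁻¹ * p.1, p.2⁻¹ * u * p.2) := by
      apply HasCompactSupport.intro' (hSc.prod hAc)
        ((isClosed_closure).prod (isClosed_closure))
      intro p hp
      rcases not_and_or.mp (by simpa [Set.mem_prod] using hp) with hp1 | hp2
      · exact hKS p.2 p.1 hp1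
      · rw [hzA p.2 u hp2, zero_mul]
    have hm : StronglyMeasurable
        (Function.uncurry fun w z => (F₁ (z, u) * F₂ (z⁻¹ * w, z⁻¹ * u * z)) • φ w) :=
      (hKcs.stronglyMeasurable_of_prod hK).smul (hφ_meas.comp_measurable measurable_fst)
    refine Integrable.mono' (integrable_const (M₁ * M₂ * C)) hm.aestronglyMeasurable ?_
    filter_upwards with p
    have h1 : ‖F₁ (p.2, u) * F₂ (p.2⁻¹ * p.1, p.2⁻¹ * u * p.2)‖ ≤ M₁ * M₂ := by
      rw [norm_mul]
      exact mul_le_mul (hM₁ _) (hM₂ _) (norm_nonneg _) hM₁0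
    calc ‖(F₁ (p.2, u) * F₂ (p.2⁻¹ * p.1, p.2⁻¹ * u * p.2)) • φ p.1‖
        = ‖F₁ (p.2, u) * F₂ (p.2⁻¹ * p.1, p.2⁻¹ * u * p.2)‖ * ‖φ p.1‖ := norm_smul _ _
      _ ≤ (M₁ * M₂) * C := mul_le_mul h1 (hφ_bdd _) (norm_nonneg _) (mul_nonneg hM₁0 hM₂0)
      _ = M₁ * M₂ * C := by ring
  calc
    (∫ w, (∫ z, F₁ (z, u) * F₂ (z⁻¹ * w, z⁻¹ * u * z) ∂μ) • φ w ∂μ)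
        = ∫ w, ∫ z, (F₁ (z, u) * F₂ (z⁻¹ * w, z⁻¹ * u * z)) • φ w ∂μ ∂μ := by
        simp_rw [integral_smul_const]
    _ = ∫ w, ∫ z in A, (F₁ (z, u) * F₂ (z⁻¹ * w, z⁻¹ * u * z)) • φ w ∂μ ∂μ := by
        congr 1 with w
        refine (setIntegral_eq_integral_of_forall_compl_eq_zero fun z hz => ?_).symm
        rw [hzA z u hz, zero_mul, zero_smul]
    _ = ∫ w in S, ∫ z in A, (F₁ (z, u) * F₂ (z⁻¹ * w, z⁻¹ * u * z)) • φ w ∂μ ∂μ := by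
        refine (setIntegral_eq_integral_of_forall_compl_eq_zero fun w hw => ?_).symm
        have : ∀ z, (F₁ (z, u) * F₂ (z⁻¹ * w, z⁻¹ * u * z)) • φ w = 0 := fun z => by
          rw [hKS z w hw, zero_smul]
        simp [this]
    _ = ∫ z in A, ∫ w in S, (F₁ (z, u) * F₂ (z⁻¹ * w, z⁻¹ * u * z)) • φ w ∂μ ∂μ :=
        integral_integral_swap hint
    _ = ∫ z in A, ∫ w, (F₁ (z, u) * F₂ (z⁻¹ * w, z⁻¹ * u * z)) • φ w ∂μ ∂μ := by
        congr 1 with z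
        refine setIntegral_eq_integral_of_forall_compl_eq_zero fun w hw => ?_
        rw [hKS z w hw, zero_smul]
    _ = ∫ z in A, ∫ w, (F₁ (z, u) * F₂ (w, z⁻¹ * u * z)) • φ (z * w) ∂μ ∂μ := by
        congr 1 with z
        rw [← integral_mul_left_eq_self
          (fun w => (F₁ (z, u) * F₂ (z⁻¹ * w, z⁻¹ * u * z)) • φ w) z]
        simp [inv_mul_cancel_left]
    _ = ∫ z in A, F₁ (z, u) • ∫ w, F₂ (w, z⁻¹ * u * z) • φ (z * w) ∂μ ∂μ := by
        simp_rw [mul_smul, integral_smul]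
    _ = ∫ z, F₁ (z, u) • ∫ w, F₂ (w, z⁻¹ * u * z) • φ (z * w) ∂μ ∂μ := by
        refine setIntegral_eq_integral_of_forall_compl_eq_zero fun z hz => ?_
        rw [hzA z u hz, zero_smul]
    _ = ∫ z, F₁ (z, u) •
          (∫ w, F₂ (w, (z⁻¹ * v i) * h * (z⁻¹ * v i)⁻¹) •
            ψ (Function.update v i (w⁻¹ * (z⁻¹ * v i))) ∂μ) ∂μ := by
        congr 1 with z
        congr 1
        congr 1 with w
        have e1 : z⁻¹ * u * z = (z⁻¹ * v i) * h * (z⁻¹ * v i)⁻¹ := by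
          rw [hu]; group
        have e2 : (z * w)⁻¹ * v i = w⁻¹ * (z⁻¹ * v i) := by
          rw [mul_inv_rev, mul_assoc]
        rw [hφ]
        simp only [e1, e2]

/-- `Π_i` is multiplicative for the quantum-double multiplication on continuous
compactly supported functions, acting on bounded measurable `ψ : G^n → V`. -/
theorem qdRepPuncture_multiplicative
    {G : Type*} [Group G] [TopologicalSpace G] [IsTopologicalGroup G]
    [LocallyCompactSpace G] [MeasurableSpace G] [BorelSpace G]
    (μ : Measure G) [μ.IsHaarMeasure]
    {n : ℕ} (i : Fin n) (h : G)
    {V : Type*} [NormedAddCommGroup V] [NormedSpace ℂ V] [CompleteSpace V]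
    (F₁ F₂ : G × G → ℂ)
    (hF₁c : Continuous F₁) (hF₁s : HasCompactSupport F₁)
    (hF₂c : Continuous F₂) (hF₂s : HasCompactSupport F₂)
    (ψ : (Fin n → G) → V) (hψ_meas : StronglyMeasurable ψ)
    (C : ℝ) (hψ_bdd : ∀ v, ‖ψ v‖ ≤ C) :
    ∀ v : Fin n → G,
      qdRepPuncture μ i h (qdMul μ F₁ F₂) ψ v
        = qdRepPuncture μ i h F₁ (qdRepPuncture μ i h F₂ ψ) v := by
  intro v
  have H := qdRep_aux μ i h F₁ F₂ hF₁c hF₁s hF₂c hF₂s ψ hψ_meas C hψ_bdd v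
  simpa only [qdRepPuncture, qdMul, Function.update_self, Function.update_idem] using H
end
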